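/- Let p : ℝ^n → ℝ be a polynomial, f a polynomial vector field, and x(t) the solution of ẋ = f(x) with x(0) = x₀, defined on an interval around 0. If γ_{p,f}(x₀) < ∞ and L^{γ_{p,f}(x₀)}_f p(x₀) > 0, then there exists ε > 0 such that p(x(t)) > 0 for all t ∈ (0, ε). -/

import Mathlib

open MvPolynomial

lemma eval_chain {n : ℕ} (x : ℝ → Fin n → ℝ) (t : ℝ) (d : Fin n → ℝ)
    (hx : ∀ i : Fin n, HasDerivAt (fun s => x s i) (d i) t)
    (q : MvPolynomial (Fin n) ℝ) :
    HasDerivAt (fun s => MvPolynomial.eval (x s) q)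
      (∑ j, MvPolynomial.eval (x t) (MvPolynomial.pderiv j q) * d j) t := by
  induction q using MvPolynomial.induction_on with
  | C a => simpa using hasDerivAt_const t a
  | add q r hq hr =>
      have := hq.add hr
      simpa [mul_add, add_mul, Finset.sum_add_distrib, Pi.add_def] using this
  | mul_X q i hq =>
      have h := hq.mul (hx i)
      have heq : (∑ j, MvPolynomial.eval (x t) (MvPolynomial.pderiv j (q * X i)) * d j)
          = (∑ j, MvPolynomial.eval (x t) (MvPolynomial.pderiv j q) * d j) * x t i
            + MvPolynomial.eval (x t) q * d i := by
        have key : ∀ j, MvPolynomial.eval (x t) (MvPolynomial.pderiv j (q * X i)) * d j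
            = (MvPolynomial.eval (x t) (MvPolynomial.pderiv j q) * d j) * x t i
              + (if i = j then MvPolynomial.eval (x t) q * d j else 0) := by
          intro j
          by_cases hij : i = j <;>
            simp [pderiv_mul, pderiv_X, Pi.single_apply, hij] <;> ring
        rw [Finset.sum_congr rfl fun j _ => key j, Finset.sum_add_distrib,
          Finset.sum_ite_eq, ← Finset.sum_mul]
        simp
      rw [heq]
      simpa [Pi.mul_def] using h

/-- The Lie derivative of a polynomial `p` along the polynomial vector field `f`:
`⟨∇p, f⟩ = ∑ j, (∂p/∂x_j) * f_j`. -/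
noncomputable def lieDeriv {n : ℕ} (f : Fin n → MvPolynomial (Fin n) ℝ)
    (p : MvPolynomial (Fin n) ℝ) : MvPolynomial (Fin n) ℝ :=
  ∑ j, MvPolynomial.pderiv j p * f j

/-- Iterated Lie derivatives: `lieIter f k p = L^k_f p`. -/
noncomputable def lieIter {n : ℕ} (f : Fin n → MvPolynomial (Fin n) ℝ)
    (k : ℕ) (p : MvPolynomial (Fin n) ℝ) : MvPolynomial (Fin n) ℝ :=
  match k with
  | 0 => p
  | k + 1 => lieDeriv f (lieIter f k p)

/-- If the first nonzero Lie derivative of `p` along `f` at `x₀` is positive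
(at its pointwise rank `k`), then `p` is positive along the trajectory for
small positive time. -/
theorem positive_lie_derivative_implies_locally_positive
    {n : ℕ} (f : Fin n → MvPolynomial (Fin n) ℝ) (p : MvPolynomial (Fin n) ℝ)
    (a b : ℝ) (ha : a < 0) (hb : 0 < b)
    (x : ℝ → Fin n → ℝ) (x₀ : Fin n → ℝ)
    (hx0 : x 0 = x₀)
    (hode : ∀ t ∈ Set.Ioo a b, ∀ i : Fin n,
      HasDerivAt (fun s => x s i) (MvPolynomial.eval (x t) (f i)) t)
    (k : ℕ)
    (hleast : ∀ j < k, MvPolynomial.eval x₀ (lieIter f j p) = 0)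
    (hpos : 0 < MvPolynomial.eval x₀ (lieIter f k p)) :
    ∃ ε > 0, ∀ t ∈ Set.Ioo (0:ℝ) ε, 0 < MvPolynomial.eval (x t) p := by
  set g : ℕ → ℝ → ℝ := fun j s => MvPolynomial.eval (x s) (lieIter f j p) with hg
  have h0ab : (0:ℝ) ∈ Set.Ioo a b := ⟨ha, hb⟩
  have hder : ∀ j : ℕ, ∀ t ∈ Set.Ioo a b, HasDerivAt (g j) (g (j+1) t) t := by
    intro j t ht
    have := eval_chain x t (fun i => MvPolynomial.eval (x t) (f i))
      (hode t ht) (lieIter f j p)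
    simpa [hg, lieIter, lieDeriv, eval_sum] using this
  have main : ∀ m : ℕ, m ≤ k →
      ∃ ε > 0, ε ≤ b ∧ ∀ t ∈ Set.Ioo (0:ℝ) ε, 0 < g (k - m) t := by
    intro m
    induction m with
    | zero =>
        intro _
        have hcont : ContinuousAt (g k) 0 := (hder k 0 h0ab).continuousAt
        have hgk0 : 0 < g k 0 := by simpa [hg, hx0] using hpos
        have hev : ∀ᶠ s in nhds (0:ℝ), 0 < g k s :=
          hcont.eventually_mem (IsOpen.mem_nhds isOpen_Ioi hgk0)
        rcases Metric.eventually_nhds_iff.1 hev with ⟨δ, hδ, hδ'⟩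
        refine ⟨min δ b, lt_min hδ hb, min_le_right _ _, ?_⟩
        intro t ht
        apply hδ'
        simp only [Real.dist_eq, sub_zero]
        rw [abs_of_pos ht.1]
        exact lt_of_lt_of_le ht.2 (min_le_left _ _)
    | succ m ih =>
        intro hm
        rcases ih (le_of_lt (Nat.lt_of_succ_le hm)) with ⟨ε, hε, hεb, hεpos⟩
        set j := k - (m + 1) with hj
        have hjk : j < k := Nat.sub_lt (Nat.lt_of_lt_of_le (Nat.succ_pos m) hm) (Nat.succ_pos m)
        have hsucc : j + 1 = k - m := by omega
        have hsub : Set.Ico (0:ℝ) ε ⊆ Set.Ioo a b := by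
          intro t ht
          exact ⟨lt_of_lt_of_le ha ht.1, lt_of_lt_of_le ht.2 hεb⟩
        have hmono : StrictMonoOn (g j) (Set.Ico 0 ε) := by
          apply strictMonoOn_of_deriv_pos (convex_Ico 0 ε)
          · intro t ht
            exact ((hder j t (hsub ht)).continuousAt).continuousWithinAt
          · intro t ht
            rw [interior_Ico] at ht
            have hd := (hder j t (hsub ⟨le_of_lt ht.1, ht.2⟩)).deriv
            rw [hd, hsucc]
            exact hεpos t ht
        refine ⟨ε, hε, hεb, ?_⟩
        intro t ht
        have h0 : g j 0 = 0 := by simpa [hg, hx0] using hleast j hjk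
        have := hmono ⟨le_refl 0, hε⟩ ⟨le_of_lt ht.1, ht.2⟩ ht.1
        rwa [h0] at this
  rcases main k (le_refl k) with ⟨ε, hε, _, hεpos⟩
  exact ⟨ε, hε, fun t ht => by simpa [hg, lieIter] using hεpos t ht⟩
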